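/- For every modulus κ with 0 < κ < 1, the function rn : ℝ → ℝ satisfies rn(0) = 0 and the differential equation (rn'(u))² = rn(u)⁴ − rn(u)² + κ²/4 for all real u. -/

import Mathlib

open Real

/-- The Gauss hypergeometric series `F(a, b; c; x)` with real parameters. -/
noncomputable def hyperF (a b c x : ℝ) : ℝ :=
  ∑' n : ℕ, (Polynomial.eval a (ascPochhammer ℝ n) * Polynomial.eval b (ascPochhammer ℝ n) /
      (Polynomial.eval c (ascPochhammer ℝ n) * (Nat.factorial n : ℝ))) * x ^ n

/-- `G κ T = ∫₀^T F(1/4, 3/4; 1/2; κ² sin² t) dt`. -/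
noncomputable def G (κ T : ℝ) : ℝ :=
  ∫ t in (0:ℝ)..T, hyperF (1/4) (3/4) (1/2) (κ ^ 2 * Real.sin t ^ 2)

/-- The complete integral `K = G κ (π/2)`. -/
noncomputable def K (κ : ℝ) : ℝ := G κ (Real.pi / 2)

/-- The auxiliary function `ψ = arcsin (κ sin φ)`. -/
noncomputable def psi (κ : ℝ) (φ : ℝ → ℝ) (u : ℝ) : ℝ :=
  Real.arcsin (κ * Real.sin (φ u))

/-- The root function `rn = sin (ψ/2)`. -/
noncomputable def rn (κ : ℝ) (φ : ℝ → ℝ) (u : ℝ) : ℝ :=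
  Real.sin (psi κ φ u / 2)

noncomputable def bco (n : ℕ) : ℝ := (ascPochhammer ℝ n).eval (1/2 : ℝ) / n.factorial

lemma bco_zero : bco 0 = 1 := by simp [bco]

lemma bco_succ_mul (n : ℕ) : bco (n+1) * (n+1) = bco n * (1/2 + n) := by
  have h1 : ((n+1).factorial : ℝ) = (n+1) * n.factorial := by
    rw [Nat.factorial_succ]; push_cast; ring
  have h2 : (n.factorial : ℝ) ≠ 0 := Nat.cast_ne_zero.2 n.factorial_ne_zero
  have h3 : ((n:ℝ)+1) ≠ 0 := by positivity
  rw [bco, bco, ascPochhammer_succ_eval, h1]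
  field_simp

lemma bco_pos (n : ℕ) : 0 < bco n :=
  div_pos (ascPochhammer_pos n _ (by norm_num)) (by positivity)

lemma bco_le_one (n : ℕ) : bco n ≤ 1 := by
  induction n with
  | zero => simp [bco_zero]
  | succ n ih =>
    have h := bco_succ_mul n
    have hp := (bco_pos n).le
    have h3 : (0:ℝ) < (n:ℝ)+1 := by positivity
    have : bco (n+1) * (n+1) ≤ 1 * ((n:ℝ)+1) := by
      rw [h]; nlinarith
    nlinarith [this]

noncomputable def Tf (z : ℝ) : ℝ := ∑' n : ℕ, bco n * z ^ n

lemma summable_T {z : ℝ} (hz : |z| < 1) : Summable (fun n : ℕ => bco n * z ^ n) := by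
  apply Summable.of_norm_bounded (summable_geometric_of_lt_one (abs_nonneg z) hz)
  intro n
  rw [norm_mul, norm_pow, Real.norm_eq_abs, Real.norm_eq_abs,
    abs_of_pos (bco_pos n)]
  calc bco n * |z| ^ n ≤ 1 * |z| ^ n := by
        apply mul_le_mul_of_nonneg_right (bco_le_one n) (by positivity)
  _ = |z| ^ n := one_mul _

lemma hasSum_T {z : ℝ} (hz : |z| < 1) : HasSum (fun n : ℕ => bco n * z ^ n) (Tf z) :=
  (summable_T hz).hasSum

lemma summable_u {r : ℝ} (hr0 : 0 < r) (hr1 : r < 1) :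
    Summable (fun n : ℕ => (n : ℝ) * r ^ (n - 1)) := by
  rw [← summable_nat_add_iff 1]
  have h1 : Summable (fun n : ℕ => (n : ℝ) * r ^ n) := by
    simpa using summable_pow_mul_geometric_of_norm_lt_one 1
      (by rwa [Real.norm_eq_abs, abs_of_pos hr0])
  have h2 : Summable (fun n : ℕ => r ^ n) := summable_geometric_of_lt_one hr0.le hr1
  have := h1.add h2
  apply this.congr
  intro n
  have e : n + 1 - 1 = n := rfl
  rw [e]
  push_cast
  ring

lemma deriv_bound {r : ℝ} (hr1 : r < 1) {y : ℝ} (hy : |y| ≤ r) (n : ℕ) :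
    ‖bco n * ((n:ℝ) * y ^ (n - 1))‖ ≤ (n : ℝ) * r ^ (n - 1) := by
  have h0 : 0 ≤ r := le_trans (abs_nonneg y) hy
  rw [norm_mul, norm_mul, Real.norm_eq_abs, Real.norm_eq_abs, Real.norm_eq_abs,
    abs_of_pos (bco_pos n), Nat.abs_cast, abs_pow]
  calc bco n * ((n:ℝ) * |y| ^ (n-1)) ≤ 1 * ((n:ℝ) * r ^ (n-1)) := by
        apply mul_le_mul (bco_le_one n)
        · exact mul_le_mul_of_nonneg_left (pow_le_pow_left₀ (abs_nonneg y) hy _) (Nat.cast_nonneg n)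
        · positivity
        · norm_num
  _ = _ := one_mul _

lemma summable_D {z : ℝ} (hz : |z| < 1) :
    Summable (fun n : ℕ => bco n * ((n:ℝ) * z ^ (n - 1))) := by
  set r := (1 + |z|)/2 with hr
  have hr0 : 0 < r := by positivity
  have hr1 : r < 1 := by rw [hr]; linarith
  have hzr : |z| ≤ r := by rw [hr]; linarith
  exact Summable.of_norm_bounded (summable_u hr0 hr1) (deriv_bound hr1 hzr)

noncomputable def Df (z : ℝ) : ℝ := ∑' n : ℕ, bco n * ((n:ℝ) * z ^ (n - 1))

lemma hasDerivAt_T {z : ℝ} (hz : |z| < 1) : HasDerivAt Tf (Df z) z := by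
  set r := (1 + |z|)/2 with hr
  have hr0 : 0 < r := by positivity
  have hr1 : r < 1 := by rw [hr]; linarith
  have hzr : |z| < r := by rw [hr]; linarith
  exact hasDerivAt_tsum_of_isPreconnected (summable_u hr0 hr1) Metric.isOpen_ball
    (convex_ball (0:ℝ) r).isPreconnected
    (fun n y _ => (hasDerivAt_pow n y).const_mul (bco n))
    (fun n y hy => deriv_bound hr1 (by simpa using (mem_ball_zero_iff.mp hy).le) n)
    (Metric.mem_ball_self hr0)
    (by simpa using summable_T (show |(0:ℝ)| < 1 by norm_num))
    (mem_ball_zero_iff.mpr (by simpa using hzr))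

lemma HasSum.congr' {f g : ℕ → ℝ} {a : ℝ} (h : HasSum f a) (he : ∀ n, f n = g n) :
    HasSum g a := (funext he : f = g) ▸ h

lemma T_ode {z : ℝ} (hz : |z| < 1) : 2 * (1 - z) * Df z = Tf z := by
  have hD : HasSum (fun n : ℕ => bco n * ((n:ℝ) * z ^ (n - 1))) (Df z) :=
    (summable_D hz).hasSum
  have hT : HasSum (fun n : ℕ => bco n * z ^ n) (Tf z) := hasSum_T hz
  -- shifted series
  have h0 : bco 0 * ((0:ℝ) * z ^ (0 - 1)) = 0 := by simp
  have h2 : HasSum (fun m : ℕ => bco (m+1) * (((m:ℝ)+1) * z ^ m)) (Df z) := by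
    have := (hasSum_nat_add_iff (f := fun n : ℕ => bco n * ((n:ℝ) * z ^ (n - 1))) 1).2
      (by simpa [h0] using hD)
    apply this.congr'
    intro m
    push_cast
    norm_num
  -- 2 * shifted = (2m+1) b_m z^m
  have h3 : HasSum (fun m : ℕ => (2*(m:ℝ)+1) * (bco m * z ^ m)) (2 * Df z) := by
    have := h2.mul_left 2
    apply this.congr'
    intro m
    have hb := bco_succ_mul m
    push_cast
    linear_combination (2 * z ^ m) * hb
  -- z * D = m b_m z^m
  have h4 : HasSum (fun m : ℕ => (m:ℝ) * (bco m * z ^ m)) (z * Df z) := by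
    have := hD.mul_left z
    apply this.congr'
    intro m
    cases m with
    | zero => simp
    | succ k =>
      have e : k + 1 - 1 = k := rfl
      rw [e, pow_succ]
      push_cast
      ring
  have h5 : HasSum (fun m : ℕ => (2*(m:ℝ)+1) * (bco m * z ^ m)) (2 * (z * Df z) + Tf z) := by
    have := (h4.mul_left 2).add hT
    apply this.congr'
    intro m; ring
  have := h3.unique h5
  linarith

lemma Tf_zero : Tf 0 = 1 := by
  rw [Tf, tsum_eq_single 0 (by intro n hn; simp [zero_pow hn])]
  simp [bco_zero]

lemma T_sq {z : ℝ} (hz : |z| < 1) : (Tf z)^2 * (1 - z) = 1 := by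
  set H : ℝ → ℝ := fun w => (Tf w)^2 * (1 - w) with hH
  have hd : ∀ w : ℝ, |w| < 1 → HasDerivAt H 0 w := by
    intro w hw
    have hT := hasDerivAt_T hw
    have h1 : HasDerivAt (fun x => (Tf x)^2) (2 * Tf w * Df w) w := by
      simpa [mul_comm] using hT.fun_pow 2
    have h2 : HasDerivAt (fun x : ℝ => (1 : ℝ) - x) (-1) w := by
      simpa using (hasDerivAt_id w).const_sub 1
    have := h1.mul h2
    have hode := T_ode hw
    refine this.congr_deriv ?_
    linear_combination (Tf w) * hode
  have key : ∀ w : ℝ, |w| < 1 → H w = H 0 := by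
    intro w hw
    rw [abs_lt] at hw
    rcases le_or_gt 0 w with h | h
    · exact constant_of_has_deriv_right_zero
        (fun y hy => (hd y (abs_lt.2 ⟨by linarith [hy.1, hy.2], by linarith [hy.1, hy.2]⟩)).continuousAt.continuousWithinAt)
        (fun y hy => (hd y (abs_lt.2 ⟨by linarith [hy.1, hy.2], by linarith [hy.1, hy.2]⟩)).hasDerivWithinAt)
        w ⟨h, le_refl w⟩
    · exact (constant_of_has_deriv_right_zero
        (fun y hy => (hd y (abs_lt.2 ⟨by linarith [hy.1, hy.2], by linarith [hy.1, hy.2]⟩)).continuousAt.continuousWithinAt)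
        (fun y hy => (hd y (abs_lt.2 ⟨by linarith [hy.1, hy.2], by linarith [hy.1, hy.2]⟩)).hasDerivWithinAt)
        0 ⟨h.le, le_refl 0⟩).symm
  have := key z hz
  rw [hH] at this
  simp only at this
  rw [this, Tf_zero]
  norm_num

lemma T_ne_zero {z : ℝ} (hz : |z| < 1) : Tf z ≠ 0 := by
  intro h
  have := T_sq hz
  rw [h] at this
  norm_num at this

lemma T_pos {z : ℝ} (hz : |z| < 1) : 0 < Tf z := by
  rcases lt_or_ge 0 (Tf z) with h | h
  · exact h
  have hneg : Tf z < 0 := lt_of_le_of_ne h (T_ne_zero hz)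
  rw [abs_lt] at hz
  have hcont : ∀ y ∈ Set.Icc (-(|z|)) (|z|), ContinuousAt Tf y := by
    intro y hy
    have : |y| < 1 := by
      rw [abs_lt]
      rcases abs_lt.1 (lt_of_le_of_lt (abs_le.2 ⟨hy.1, hy.2⟩) (abs_lt.2 hz)) with ⟨a, b⟩
      exact ⟨a, b⟩
    exact (hasDerivAt_T this).continuousAt
  exfalso
  rcases le_or_gt 0 z with h0 | h0
  · -- z ≥ 0, Tf 0 = 1 > 0 > Tf z on [0,z]
    have hcon : ContinuousOn Tf (Set.Icc 0 z) := fun y hy =>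
      (hcont y ⟨by have := abs_nonneg z; simp [abs_of_nonneg h0] at *; linarith [hy.1],
        by simp [abs_of_nonneg h0]; linarith [hy.2]⟩).continuousWithinAt
    have := intermediate_value_Icc' h0 hcon
    have h0mem : (0:ℝ) ∈ Set.Icc (Tf z) (Tf 0) := by
      rw [Tf_zero]; exact ⟨hneg.le, by norm_num⟩
    rcases this h0mem with ⟨c, hc, hc0⟩
    have : |c| < 1 := by
      rw [abs_lt]; exact ⟨by linarith [hc.1], by linarith [hc.2]⟩
    exact T_ne_zero this hc0
  · have hcon : ContinuousOn Tf (Set.Icc z 0) := fun y hy =>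
      (hcont y ⟨by simp [abs_of_neg h0]; linarith [hy.1], by simp [abs_of_neg h0]; linarith [hy.1, hy.2]⟩).continuousWithinAt
    have := intermediate_value_Icc h0.le hcon
    have h0mem : (0:ℝ) ∈ Set.Icc (Tf z) (Tf 0) := by
      rw [Tf_zero]; exact ⟨hneg.le, by norm_num⟩
    rcases this h0mem with ⟨c, hc, hc0⟩
    have : |c| < 1 := by
      rw [abs_lt]; exact ⟨by linarith [hc.1], by linarith [hc.2]⟩
    exact T_ne_zero this hc0

lemma T_eq {z : ℝ} (hz : |z| < 1) : Tf z = 1 / Real.sqrt (1 - z) := by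
  have h1 : (0:ℝ) < 1 - z := by rw [abs_lt] at hz; linarith [hz.2]
  have hsq := T_sq hz
  have hpos := T_pos hz
  have hs : Real.sqrt (1 - z) > 0 := Real.sqrt_pos.2 h1
  have : (Tf z * Real.sqrt (1 - z))^2 = 1 := by
    rw [mul_pow, Real.sq_sqrt h1.le]; exact hsq
  have habs : Tf z * Real.sqrt (1 - z) = 1 := by
    have h2 : Tf z * Real.sqrt (1 - z) > 0 := mul_pos hpos hs
    nlinarith
  field_simp
  linarith [habs]

noncomputable def aco (n : ℕ) : ℝ :=
  Polynomial.eval (1/4 : ℝ) (ascPochhammer ℝ n) * Polynomial.eval (3/4 : ℝ) (ascPochhammer ℝ n) /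
      (Polynomial.eval (1/2 : ℝ) (ascPochhammer ℝ n) * (Nat.factorial n : ℝ))

lemma key_ident (m : ℕ) :
    Polynomial.eval (1/4 : ℝ) (ascPochhammer ℝ m) * Polynomial.eval (3/4 : ℝ) (ascPochhammer ℝ m)
      * ((2*m).factorial : ℝ) =
    Polynomial.eval (1/2 : ℝ) (ascPochhammer ℝ (2*m)) *
      (Polynomial.eval (1/2 : ℝ) (ascPochhammer ℝ m) * (m.factorial : ℝ)) := by
  induction m with
  | zero => simp
  | succ m ih =>
    have e2 : 2 * (m+1) = (2*m + 1) + 1 := by ring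
    rw [e2]
    simp only [ascPochhammer_succ_eval, Nat.factorial_succ]
    push_cast
    linear_combination ((1/4 + (m:ℝ)) * (3/4 + (m:ℝ)) * (2*(m:ℝ)+2) * (2*(m:ℝ)+1)) * ih

lemma aco_eq (m : ℕ) : aco m = bco (2*m) := by
  have hk := key_ident m
  have h1 : (0:ℝ) < Polynomial.eval (1/2 : ℝ) (ascPochhammer ℝ m) :=
    ascPochhammer_pos m _ (by norm_num)
  have h2 : (0:ℝ) < (m.factorial : ℝ) := by positivity
  have h3 : (0:ℝ) < ((2*m).factorial : ℝ) := by positivity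
  rw [aco, bco]
  rw [div_eq_div_iff (by positivity) (by positivity)]
  push_cast at hk ⊢
  linarith [hk]

lemma hyperF_tsum (x : ℝ) : hyperF (1/4) (3/4) (1/2) x = ∑' m : ℕ, aco m * x ^ m := rfl

lemma hyperF_val {z : ℝ} (hz : |z| < 1) :
    hyperF (1/4) (3/4) (1/2) (z^2) = (Tf z + Tf (-z)) / 2 := by
  have hz' : |(-z)| < 1 := by rwa [abs_neg]
  have h1 := hasSum_T hz
  have h2 := hasSum_T hz'
  have hadd := h1.add h2
  have hinj : Function.Injective (fun m : ℕ => 2 * m) := fun a b h => by simp only [] at h; omega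
  have h0 : ∀ n ∉ Set.range (fun m : ℕ => 2 * m),
      bco n * z ^ n + bco n * (-z) ^ n = 0 := by
    intro n hn
    have hodd : Odd n := by
      rcases Nat.even_or_odd n with he | ho
      · obtain ⟨k, hk⟩ := he
        exact absurd ⟨k, show 2 * k = n by omega⟩ hn
      · exact ho
    rw [hodd.neg_pow]
    ring
  have heven : HasSum ((fun n => bco n * z ^ n + bco n * (-z) ^ n) ∘ (fun m : ℕ => 2 * m))
      (Tf z + Tf (-z)) := (hinj.hasSum_iff h0).mpr hadd
  have hfin : HasSum (fun m : ℕ => aco m * (z^2) ^ m) ((Tf z + Tf (-z)) / 2) := by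
    have := heven.div_const 2
    apply this.congr'
    intro m
    simp only [Function.comp_apply]
    rw [aco_eq m]
    have hev : (-z) ^ (2*m) = z ^ (2*m) := by
      rw [neg_pow, pow_mul]; simp
    rw [hev, ← pow_mul]
    ring
  rw [hyperF_tsum]
  exact hfin.tsum_eq

noncomputable def gint (κ t : ℝ) : ℝ :=
  (1 / Real.sqrt (1 - κ * Real.sin t) + 1 / Real.sqrt (1 + κ * Real.sin t)) / 2

section kappa
variable {κ : ℝ} (hκ₀ : 0 < κ) (hκ₁ : κ < 1)
include hκ₀ hκ₁

lemma abs_z_lt (t : ℝ) : |κ * Real.sin t| < 1 := by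
  rw [abs_mul, abs_of_pos hκ₀]
  calc κ * |Real.sin t| ≤ κ * 1 := by
        exact mul_le_mul_of_nonneg_left (Real.abs_sin_le_one t) hκ₀.le
  _ < 1 := by linarith

lemma integrand_eq (t : ℝ) :
    hyperF (1/4) (3/4) (1/2) (κ ^ 2 * Real.sin t ^ 2) = gint κ t := by
  have hz := abs_z_lt hκ₀ hκ₁ t
  have h2 : κ ^ 2 * Real.sin t ^ 2 = (κ * Real.sin t) ^ 2 := by ring
  rw [h2, hyperF_val hz, gint, T_eq hz, T_eq (by rwa [abs_neg])]
  ring_nf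

lemma one_sub_pos (t : ℝ) : 0 < 1 - κ * Real.sin t := by
  have := abs_lt.1 (abs_z_lt hκ₀ hκ₁ t); linarith [this.2]

lemma one_add_pos (t : ℝ) : 0 < 1 + κ * Real.sin t := by
  have := abs_lt.1 (abs_z_lt hκ₀ hκ₁ t); linarith [this.1]

lemma gint_pos (t : ℝ) : 0 < gint κ t := by
  have h1 := Real.sqrt_pos.2 (one_sub_pos hκ₀ hκ₁ t)
  have h2 := Real.sqrt_pos.2 (one_add_pos hκ₀ hκ₁ t)
  have := one_div_pos.2 h1
  have := one_div_pos.2 h2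
  rw [gint]; positivity

lemma gint_cont : Continuous (gint κ) := by
  apply Continuous.div_const
  apply Continuous.add
  · apply Continuous.div continuous_const
    · exact (Real.continuous_sqrt.comp (by continuity))
    · intro t
      exact (Real.sqrt_pos.2 (one_sub_pos hκ₀ hκ₁ t)).ne'
  · apply Continuous.div continuous_const
    · exact (Real.continuous_sqrt.comp (by continuity))
    · intro t
      exact (Real.sqrt_pos.2 (one_add_pos hκ₀ hκ₁ t)).ne'

lemma G_eq : G κ = fun T => ∫ t in (0:ℝ)..T, gint κ t := by
  funext T
  unfold G
  apply intervalIntegral.integral_congr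
  intro t _
  exact integrand_eq hκ₀ hκ₁ t

lemma hasDerivAt_G (T : ℝ) : HasDerivAt (G κ) (gint κ T) T := by
  rw [G_eq hκ₀ hκ₁]
  exact ((gint_cont hκ₀ hκ₁).integral_hasStrictDerivAt 0 T).hasDerivAt

lemma G_strictMono : StrictMono (G κ) :=
  strictMono_of_deriv_pos (fun x => by
    rw [(hasDerivAt_G hκ₀ hκ₁ x).deriv]; exact gint_pos hκ₀ hκ₁ x)

lemma G_zero : G κ 0 = 0 := by
  rw [G_eq hκ₀ hκ₁]; simp
end kappa

section main
variable {κ : ℝ} (hκ₀ : 0 < κ) (hκ₁ : κ < 1)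
  {φ : ℝ → ℝ} (hφ₁ : Function.LeftInverse φ (G κ)) (hφ₂ : Function.RightInverse φ (G κ))
include hκ₀ hκ₁ hφ₁ hφ₂

lemma phi_mono : StrictMono φ := by
  intro u v huv
  have := (G_strictMono hκ₀ hκ₁).lt_iff_lt (a := φ u) (b := φ v)
  rw [hφ₂ u, hφ₂ v] at this
  exact this.1 huv

lemma phi_cont : Continuous φ :=
  (phi_mono hκ₀ hκ₁ hφ₁ hφ₂).monotone.continuous_of_denseRange
    hφ₁.surjective.denseRange

lemma hasDerivAt_phi (u : ℝ) : HasDerivAt φ ((gint κ (φ u))⁻¹) u :=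
  HasDerivAt.of_local_left_inverse ((phi_cont hκ₀ hκ₁ hφ₁ hφ₂).continuousAt)
    (hasDerivAt_G hκ₀ hκ₁ (φ u)) (gint_pos hκ₀ hκ₁ (φ u)).ne'
    (Filter.Eventually.of_forall hφ₂)

lemma hasDerivAt_rn (u : ℝ) :
    HasDerivAt (rn κ φ)
      (Real.cos (psi κ φ u / 2) *
        ((1 / Real.sqrt (1 - (κ * Real.sin (φ u)) ^ 2) *
          (κ * (Real.cos (φ u) * (gint κ (φ u))⁻¹))) / 2)) u := by
  have hz := abs_z_lt hκ₀ hκ₁ (φ u)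
  have hz' := abs_lt.1 hz
  have hinner : HasDerivAt (fun u => κ * Real.sin (φ u))
      (κ * (Real.cos (φ u) * (gint κ (φ u))⁻¹)) u :=
    ((Real.hasDerivAt_sin (φ u)).comp u (hasDerivAt_phi hκ₀ hκ₁ hφ₁ hφ₂ u)).const_mul κ
  have hpsi : HasDerivAt (psi κ φ)
      (1 / Real.sqrt (1 - (κ * Real.sin (φ u)) ^ 2) *
        (κ * (Real.cos (φ u) * (gint κ (φ u))⁻¹))) u := by
    unfold psi
    exact (Real.hasDerivAt_arcsin (by linarith [hz'.1]) (by linarith [hz'.2])).comp u hinner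
  unfold rn
  exact (Real.hasDerivAt_sin (psi κ φ u / 2)).comp u (hpsi.div_const 2)

end main

theorem stmt10 (κ : ℝ) (hκ₀ : 0 < κ) (hκ₁ : κ < 1)
    (φ : ℝ → ℝ) (hφ₁ : Function.LeftInverse φ (G κ))
    (hφ₂ : Function.RightInverse φ (G κ)) :
    rn κ φ 0 = 0 ∧
      ∀ u : ℝ, (deriv (rn κ φ) u) ^ 2 =
        (rn κ φ u) ^ 4 - (rn κ φ u) ^ 2 + κ ^ 2 / 4 := by
  constructor
  · have h0 : φ 0 = 0 := by
      have := hφ₁ 0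
      rwa [G_zero hκ₀ hκ₁] at this
    simp [rn, psi, h0]
  · intro u
    rw [(hasDerivAt_rn hκ₀ hκ₁ hφ₁ hφ₂ u).deriv]
    set θ := φ u with hθ
    set s := Real.sin θ with hs
    set C := Real.cos θ with hC
    have hz : |κ * s| < 1 := abs_z_lt hκ₀ hκ₁ θ
    have hz' := abs_lt.1 hz
    have hz2 : (κ * s)^2 < 1 := by nlinarith [hz'.1, hz'.2]
    set c := Real.sqrt (1 - (κ * s)^2) with hc
    set A := Real.sqrt (1 - κ * s) with hA
    set B := Real.sqrt (1 + κ * s) with hB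
    have hc2 : c^2 = 1 - (κ * s)^2 := Real.sq_sqrt (by linarith)
    have hc0 : 0 < c := Real.sqrt_pos.2 (by linarith)
    have hA2 : A^2 = 1 - κ * s := Real.sq_sqrt (by linarith [hz'.2])
    have hB2 : B^2 = 1 + κ * s := Real.sq_sqrt (by linarith [hz'.1])
    have hA0 : 0 < A := Real.sqrt_pos.2 (by linarith [hz'.2])
    have hB0 : 0 < B := Real.sqrt_pos.2 (by linarith [hz'.1])
    have hAB : A * B = c := by
      rw [hA, hB, ← Real.sqrt_mul (by linarith [hz'.2])]
      rw [hc]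
      congr 1
      ring
    have hsum : (B + A)^2 = 2 + 2*c := by
      linear_combination hB2 + hA2 + 2 * hAB
    set gv := gint κ θ with hgv
    have hform : gv = ((B + A)/c)/2 := by
      rw [hgv, gint]
      rw [div_add_div _ _ hA0.ne' hB0.ne', hAB]
      ring_nf
    have hgv0 : gv ≠ 0 := (gint_pos hκ₀ hκ₁ θ).ne'
    have hg2 : gv^2 * (4*c^2) = 2 + 2*c := by
      rw [hform]
      field_simp
      linear_combination 4 * hsum
    have hcψ : Real.cos (psi κ φ u) = c := by
      rw [psi]
      exact Real.cos_arcsin _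
    have hch2 : Real.cos (psi κ φ u / 2)^2 = (1 + c)/2 := by
      rw [Real.cos_sq, show 2*(psi κ φ u/2) = psi κ φ u by ring, hcψ]
      ring
    have hrs : rn κ φ u ^ 2 = (1 - c)/2 := by
      rw [rn, Real.sin_sq, hch2]
      ring
    have hC2 : C^2 = 1 - s^2 := by
      rw [hC, hs, Real.cos_sq']
    have hL : (Real.cos (psi κ φ u / 2) *
        ((1 / c * (κ * (C * gv⁻¹))) / 2))^2 = κ^2 * C^2 / 4 := by
      have e1 : (Real.cos (psi κ φ u / 2) *
          ((1 / c * (κ * (C * gv⁻¹))) / 2))^2 =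
          Real.cos (psi κ φ u / 2)^2 * (κ^2 * C^2) / (4 * c^2 * gv^2) := by
        field_simp
        ring
      rw [e1, hch2]
      rw [div_eq_div_iff (by positivity) (by norm_num)]
      linear_combination (-(κ^2 * C^2)) * hg2
    rw [hL]
    have h4 : rn κ φ u ^ 4 = ((1 - c)/2)^2 := by
      rw [show rn κ φ u ^ 4 = (rn κ φ u ^ 2)^2 by ring, hrs]
    rw [h4, hrs]
    linear_combination (-1/4) * hc2 + (κ^2/4) * hC2
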